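/- Let a < b be reals, p, q, f : [a,b] → ℝ continuous. Suppose z : [a,b] → ℝ is continuously differentiable and satisfies the Riccati equation z'(t) + p(t) z(t) − z(t)² = q(t) for all t ∈ [a,b]. Then for every ε > 0 and every twice continuously differentiable y : [a,b] → ℝ with |y''(t) + p(t) y'(t) + q(t) y(t) − f(t)| ≤ ε on [a,b], there exists a constant K > 0 (depending only on p, z, a, b, but not on y or ε) and a twice continuously differentiable u : [a,b] → ℝ with u''(t) + p(t) u'(t) + q(t) u(t) = f(t) on [a,b] and |y(t) − u(t)| ≤ K ε for all t ∈ [a,b]. -/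

import Mathlib

open Set

lemma ftc_deriv {h : ℝ → ℝ} (hh : Continuous h) (a t : ℝ) :
    HasDerivAt (fun s => ∫ x in a..s, h x) (h t) t :=
  intervalIntegral.integral_hasDerivAt_right (hh.intervalIntegrable _ _)
    (hh.stronglyMeasurableAtFilter _ _) hh.continuousAt

lemma ext_cont {a b : ℝ} (hab : a ≤ b) {h : ℝ → ℝ} (hh : ContinuousOn h (Icc a b)) :
    ∃ he : ℝ → ℝ, Continuous he ∧ ∀ t ∈ Icc a b, he t = h t := by
  refine ⟨fun t => h (max a (min b t)), ?_, ?_⟩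
  · apply hh.comp_continuous (continuous_const.max (continuous_const.min continuous_id))
    intro x
    exact ⟨le_max_left _ _, max_le hab (min_le_left _ _)⟩
  · intro t ht
    show h (max a (min b t)) = h t
    rw [min_eq_right ht.2, max_eq_right ht.1]

lemma bound_from_deriv {a b : ℝ} {E E' : ℝ → ℝ} {c : ℝ}
    (hE : ∀ t ∈ Icc a b, HasDerivAt E (E' t) t)
    (hE' : ∀ t ∈ Icc a b, |E' t| ≤ c)
    (hEa : E a = 0) {t : ℝ} (ht : t ∈ Icc a b) : |E t| ≤ c * (b - a) := by
  have ha : a ∈ Icc a b := left_mem_Icc.mpr (ht.1.trans ht.2)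
  have h := (convex_Icc a b).norm_image_sub_le_of_norm_hasDerivWithin_le
    (fun x hx => (hE x hx).hasDerivWithinAt) (fun x hx => by simpa using hE' x hx) ha ht
  rw [hEa, sub_zero] at h
  have hc : 0 ≤ c := le_trans (abs_nonneg _) (hE' a ha)
  calc |E t| = ‖E t‖ := rfl
    _ ≤ c * ‖t - a‖ := h
    _ ≤ c * (b - a) := by
        apply mul_le_mul_of_nonneg_left _ hc
        rw [Real.norm_eq_abs, abs_sub_le_iff]
        constructor <;> linarith [ht.1, ht.2]

noncomputable def sol (r g : ℝ → ℝ) (a c : ℝ) : ℝ → ℝ :=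
  fun t => Real.exp (-(∫ x in a..t, r x)) *
    (c + ∫ x in a..t, Real.exp (∫ s in a..x, r s) * g x)

lemma cont_integrand {r g : ℝ → ℝ} (hr : Continuous r) (hg : Continuous g) (a : ℝ) :
    Continuous (fun x => Real.exp (∫ s in a..x, r s) * g x) := by
  have hR : Continuous (fun x => ∫ s in a..x, r s) :=
    continuous_iff_continuousAt.mpr (fun t => (ftc_deriv hr a t).continuousAt)
  exact (hR.rexp).mul hg

lemma sol_hasDerivAt {r g : ℝ → ℝ} (hr : Continuous r) (hg : Continuous g) (a c t : ℝ) :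
    HasDerivAt (sol r g a c) (g t - r t * sol r g a c t) t := by
  have hR : ∀ s, HasDerivAt (fun x => ∫ x' in a..x, r x') (r s) s := ftc_deriv hr a
  have h1 : HasDerivAt (fun s => Real.exp (-(∫ x in a..s, r x)))
      (Real.exp (-(∫ x in a..t, r x)) * (-(r t))) t := ((hR t).neg).exp
  have h2 : HasDerivAt (fun s => c + ∫ x in a..s, Real.exp (∫ s' in a..x, r s') * g x)
      (Real.exp (∫ s' in a..t, r s') * g t) t :=
    (ftc_deriv (cont_integrand hr hg a) a t).const_add _
  have h3 := h1.mul h2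
  refine h3.congr_deriv (Eq.symm ?_)
  have hx : Real.exp (-(∫ x in a..t, r x)) * Real.exp (∫ x in a..t, r x) = 1 := by
    rw [← Real.exp_add]; simp
  simp only [sol]
  linear_combination (-(g t)) * hx

lemma sol_cont {r g : ℝ → ℝ} (hr : Continuous r) (hg : Continuous g) (a c : ℝ) :
    Continuous (sol r g a c) :=
  continuous_iff_continuousAt.mpr (fun t => (sol_hasDerivAt hr hg a c t).continuousAt)

lemma hyers_first {a b : ℝ} {r g : ℝ → ℝ} (hr : Continuous r) (hg : Continuous g)
    {B ε : ℝ} (hB : ∀ t ∈ Icc a b, |∫ x in a..t, r x| ≤ B)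
    {w w' : ℝ → ℝ}
    (hw : ∀ t ∈ Icc a b, HasDerivAt w (w' t) t)
    (hbd : ∀ t ∈ Icc a b, |w' t + r t * w t - g t| ≤ ε) :
    ∀ t ∈ Icc a b, |w t - sol r g a (w a) t| ≤ ((b - a) * (Real.exp B * Real.exp B)) * ε := by
  set E : ℝ → ℝ := fun s =>
    Real.exp (∫ x in a..s, r x) * w s -
      (w a + ∫ x in a..s, Real.exp (∫ x' in a..x, r x') * g x) with hEdef
  have hEd : ∀ s ∈ Icc a b,
      HasDerivAt E (Real.exp (∫ x in a..s, r x) * (w' s + r s * w s - g s)) s := by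
    intro s hs
    have h1 := (((ftc_deriv hr a s).exp).mul (hw s hs)).sub
      ((ftc_deriv (cont_integrand hr hg a) a s).const_add (w a))
    refine h1.congr_deriv (Eq.symm ?_)
    ring
  have hE' : ∀ s ∈ Icc a b,
      |Real.exp (∫ x in a..s, r x) * (w' s + r s * w s - g s)| ≤ Real.exp B * ε := by
    intro s hs
    rw [abs_mul, Real.abs_exp]
    exact mul_le_mul (Real.exp_le_exp.mpr ((abs_le.mp (hB s hs)).2)) (hbd s hs)
      (abs_nonneg _) (Real.exp_pos B).le
  have hEa : E a = 0 := by simp [hEdef]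
  intro t ht
  have hEb := bound_from_deriv hEd hE' hEa ht
  have hx : Real.exp (-(∫ x in a..t, r x)) * Real.exp (∫ x in a..t, r x) = 1 := by
    rw [← Real.exp_add]; simp
  have hid : w t - sol r g a (w a) t = Real.exp (-(∫ x in a..t, r x)) * E t := by
    simp only [hEdef, sol]
    linear_combination (-(w t)) * hx
  rw [hid, abs_mul, Real.abs_exp]
  have h4 : Real.exp (-(∫ x in a..t, r x)) ≤ Real.exp B :=
    Real.exp_le_exp.mpr (by linarith [(abs_le.mp (hB t ht)).1])
  calc Real.exp (-(∫ x in a..t, r x)) * |E t| ≤ Real.exp B * ((Real.exp B * ε) * (b - a)) :=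
        mul_le_mul h4 hEb (abs_nonneg _) (Real.exp_pos B).le
    _ = ((b - a) * (Real.exp B * Real.exp B)) * ε := by ring

theorem stmt_6 (a b : ℝ) (hab : a < b) (p q f : ℝ → ℝ)
    (hp : ContinuousOn p (Icc a b)) (hq : ContinuousOn q (Icc a b))
    (hf : ContinuousOn f (Icc a b))
    (z z' : ℝ → ℝ)
    (hz : ∀ t ∈ Icc a b, HasDerivAt z (z' t) t)
    (hz' : ContinuousOn z' (Icc a b))
    (hric : ∀ t ∈ Icc a b, z' t + p t * z t - (z t) ^ 2 = q t) :
    ∃ K > 0, ∀ ε > 0, ∀ y y' y'' : ℝ → ℝ,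
      (∀ t ∈ Icc a b, HasDerivAt y (y' t) t) →
      (∀ t ∈ Icc a b, HasDerivAt y' (y'' t) t) →
      ContinuousOn y'' (Icc a b) →
      (∀ t ∈ Icc a b, |y'' t + p t * y' t + q t * y t - f t| ≤ ε) →
      ∃ u u' u'' : ℝ → ℝ,
        (∀ t ∈ Icc a b, HasDerivAt u (u' t) t) ∧
        (∀ t ∈ Icc a b, HasDerivAt u' (u'' t) t) ∧
        ContinuousOn u'' (Icc a b) ∧
        (∀ t ∈ Icc a b, u'' t + p t * u' t + q t * u t = f t) ∧
        (∀ t ∈ Icc a b, |y t - u t| ≤ K * ε) := by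
  have hab' : a ≤ b := hab.le
  have hba : (0:ℝ) < b - a := by linarith
  obtain ⟨pe, hpec, hpe⟩ := ext_cont hab' hp
  obtain ⟨fe, hfec, hfe⟩ := ext_cont hab' hf
  obtain ⟨ze', hze'c, hze'⟩ := ext_cont hab' hz'
  set Z : ℝ → ℝ := fun t => z a + ∫ x in a..t, ze' x with hZdef
  have hZd : ∀ t, HasDerivAt Z (ze' t) t := fun t => (ftc_deriv hze'c a t).const_add _
  have hZc : Continuous Z := continuous_iff_continuousAt.mpr fun t => (hZd t).continuousAt
  have hZz : ∀ t ∈ Icc a b, Z t = z t := by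
    intro t ht
    have hsub : uIcc a t ⊆ Icc a b := by
      rw [uIcc_of_le ht.1]
      exact Icc_subset_Icc le_rfl ht.2
    have h1 : (∫ x in a..t, ze' x) = ∫ x in a..t, z' x :=
      intervalIntegral.integral_congr (fun x hx => hze' x (hsub hx))
    have h2 : (∫ x in a..t, z' x) = z t - z a :=
      intervalIntegral.integral_eq_sub_of_hasDerivAt (fun x hx => hz x (hsub hx))
        ((hz'.mono hsub).intervalIntegrable)
    simp only [hZdef]
    rw [h1, h2]; ring
  set r₁ : ℝ → ℝ := fun t => pe t - Z t with hr₁def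
  have hr₁c : Continuous r₁ := hpec.sub hZc
  have hR₁c : Continuous (fun t => ∫ x in a..t, r₁ x) :=
    continuous_iff_continuousAt.mpr fun t => (ftc_deriv hr₁c a t).continuousAt
  have hR₂c : Continuous (fun t => ∫ x in a..t, Z x) :=
    continuous_iff_continuousAt.mpr fun t => (ftc_deriv hZc a t).continuousAt
  obtain ⟨B₁, hB₁⟩ := (isCompact_Icc (a := a) (b := b)).exists_bound_of_continuousOn
    hR₁c.continuousOn
  obtain ⟨B₂, hB₂⟩ := (isCompact_Icc (a := a) (b := b)).exists_bound_of_continuousOn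
    hR₂c.continuousOn
  have hB₁' : ∀ t ∈ Icc a b, |∫ x in a..t, r₁ x| ≤ B₁ := fun t ht => by simpa using hB₁ t ht
  have hB₂' : ∀ t ∈ Icc a b, |∫ x in a..t, Z x| ≤ B₂ := fun t ht => by simpa using hB₂ t ht
  refine ⟨((b - a) * (Real.exp B₂ * Real.exp B₂)) * ((b - a) * (Real.exp B₁ * Real.exp B₁)),
    mul_pos (mul_pos hba (mul_pos (Real.exp_pos _) (Real.exp_pos _)))
      (mul_pos hba (mul_pos (Real.exp_pos _) (Real.exp_pos _))), ?_⟩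
  intro ε hε y y' y'' hy hy' hy'' hbound
  -- first application : w = y' + Z y
  have hw : ∀ t ∈ Icc a b, HasDerivAt (fun s => y' s + Z s * y s)
      (y'' t + (ze' t * y t + Z t * y' t)) t :=
    fun t ht => (hy' t ht).add ((hZd t).mul (hy t ht))
  have hbd1 : ∀ t ∈ Icc a b,
      |(y'' t + (ze' t * y t + Z t * y' t)) + r₁ t * (y' t + Z t * y t) - fe t| ≤ ε := by
    intro t ht
    have e1 := hpe t ht
    have e2 := hfe t ht
    have e3 := hze' t ht
    have e4 := hZz t ht
    have e5 := hric t ht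
    have key : (y'' t + (ze' t * y t + Z t * y' t)) + r₁ t * (y' t + Z t * y t) - fe t
        = y'' t + p t * y' t + q t * y t - f t := by
      simp only [hr₁def]
      rw [e1, e2, e3, e4]
      linear_combination (y t) * e5
    rw [key]; exact hbound t ht
  have hwv := hyers_first hr₁c hfec hB₁' hw hbd1
  set v : ℝ → ℝ := sol r₁ fe a (y' a + Z a * y a) with hvdef
  have hvd : ∀ t, HasDerivAt v (fe t - r₁ t * v t) t := sol_hasDerivAt hr₁c hfec a _
  have hvc : Continuous v := sol_cont hr₁c hfec a _
  -- second application
  have hyu := hyers_first hZc hvc hB₂' hy hwv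
  set u : ℝ → ℝ := sol Z v a (y a) with hudef
  have hud : ∀ t, HasDerivAt u (v t - Z t * u t) t := sol_hasDerivAt hZc hvc a _
  have huc : Continuous u := sol_cont hZc hvc a _
  refine ⟨u, fun t => v t - Z t * u t,
    fun t => (fe t - r₁ t * v t) - (ze' t * u t + Z t * (v t - Z t * u t)),
    fun t _ => hud t, ?_, ?_, ?_, ?_⟩
  · intro t _
    exact (hvd t).sub ((hZd t).mul (hud t))
  · exact ((hfec.sub (hr₁c.mul hvc)).sub
      ((hze'c.mul huc).add (hZc.mul (hvc.sub (hZc.mul huc))))).continuousOn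
  · intro t ht
    have e1 := hpe t ht
    have e2 := hfe t ht
    have e3 := hze' t ht
    have e4 := hZz t ht
    have e5 := hric t ht
    show (fe t - r₁ t * v t) - (ze' t * u t + Z t * (v t - Z t * u t))
        + p t * (v t - Z t * u t) + q t * u t = f t
    simp only [hr₁def]
    rw [e1, e2, e3, e4]
    linear_combination (-(u t)) * e5
  · intro t ht
    calc |y t - u t| ≤ ((b - a) * (Real.exp B₂ * Real.exp B₂)) *
          (((b - a) * (Real.exp B₁ * Real.exp B₁)) * ε) := hyu t ht
      _ = ((b - a) * (Real.exp B₂ * Real.exp B₂)) *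
          ((b - a) * (Real.exp B₁ * Real.exp B₁)) * ε := by ring
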